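/- Let N_t ≥ 1 be an integer, N_r ≥ 2 an even integer, and set L = (N_t + 1)·N_r/2 − 1. Then χ(K_{N_r}^L) > χ((N_r/2)·U_{N_t}); that is, the spatial variance of the clustered receive array strictly exceeds the spatial variance of the dilated-ULA transmit array, so transmit beamforming remains the optimal waveform for this transmit–receive pair. -/

import Mathlib

/-- Spatial mean of a finite set of integer sensor positions. -/
noncomputable def spatialMean (D : Finset ℤ) : ℝ :=
  (∑ d ∈ D, (d : ℝ)) / D.card

/-- Spatial variance of a finite set of integer sensor positions. -/
noncomputable def spatialVar (D : Finset ℤ) : ℝ :=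
  (∑ d ∈ D, ((d : ℝ) - spatialMean D) ^ 2) / D.card

/-- The `N`-sensor uniform linear array `U_N = {0, 1, ..., N-1}` as a set of integers. -/
noncomputable def ULA (N : ℕ) : Finset ℤ := Finset.Ico (0 : ℤ) (N : ℤ)

/-- The clustered array `K_N^L = U_{N/2} ∪ (L - U_{N/2})`. -/
noncomputable def clusteredArray (N L : ℕ) : Finset ℤ :=
  ULA (N / 2) ∪ (ULA (N / 2)).image (fun u => (L : ℤ) - u)

lemma sum_range_real (n : ℕ) : ∑ i ∈ Finset.range n, (i:ℝ) = n*(n-1)/2 := by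
  induction n with
  | zero => simp
  | succ k ih => rw [Finset.sum_range_succ, ih]; push_cast; ring

lemma sum_range_sq_real (n : ℕ) :
    ∑ i ∈ Finset.range n, (i:ℝ)^2 = n*(n-1)*(2*n-1)/6 := by
  induction n with
  | zero => simp
  | succ k ih => rw [Finset.sum_range_succ, ih]; push_cast; ring

lemma ULA_map (n : ℕ) :
    ULA n = (Finset.range n).map ⟨(Nat.cast : ℕ → ℤ), Nat.cast_injective⟩ := by
  ext x
  simp only [ULA, Finset.mem_Ico, Finset.mem_map, Finset.mem_range,
    Function.Embedding.coeFn_mk]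
  constructor
  · rintro ⟨h0, h1⟩
    exact ⟨x.toNat, by omega, by omega⟩
  · rintro ⟨m, hm, rfl⟩
    exact ⟨Int.natCast_nonneg m, by exact_mod_cast hm⟩

lemma var_eq (D : Finset ℤ) (h : D.card ≠ 0) :
    spatialVar D = (∑ d ∈ D, (d:ℝ)^2)/D.card - (spatialMean D)^2 := by
  have hc : (D.card : ℝ) ≠ 0 := Nat.cast_ne_zero.mpr h
  have hsum : ∑ d ∈ D, (d : ℝ) = D.card * spatialMean D := by
    rw [spatialMean]; field_simp
  unfold spatialVar
  have key : ∑ d ∈ D, ((d : ℝ) - spatialMean D) ^ 2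
      = (∑ d ∈ D, (d:ℝ)^2) - 2 * spatialMean D * (∑ d ∈ D, (d:ℝ))
        + D.card * (spatialMean D)^2 := by
    have : ∀ d ∈ D, ((d : ℝ) - spatialMean D) ^ 2
        = (d:ℝ)^2 - 2 * spatialMean D * (d:ℝ) + (spatialMean D)^2 := by
      intro d _; ring
    rw [Finset.sum_congr rfl this, Finset.sum_add_distrib, Finset.sum_sub_distrib,
      ← Finset.mul_sum, Finset.sum_const, nsmul_eq_mul]
  rw [key, hsum]
  field_simp
  ring

/-- With `L = (N_t + 1)·N_r/2 − 1`, the spatial variance of the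
clustered receive array strictly exceeds that of the dilated-ULA transmit array,
so transmit beamforming remains the CRB-optimal waveform for this pair. -/
theorem clustered_rx_variance_gt_dilated_ULA_tx
    (Nt Nr : ℕ) (hNt : 1 ≤ Nt) (hNr : 2 ≤ Nr) (hNrEven : Even Nr)
    (L : ℕ) (hL : L = (Nt + 1) * Nr / 2 - 1) :
    spatialVar (clusteredArray Nr L)
      > spatialVar ((ULA Nt).image (fun m => ((Nr : ℤ) / 2) * m)) := by
  obtain ⟨M, hM2⟩ := hNrEven
  have hM1 : 1 ≤ M := by omega
  have hNr2 : Nr / 2 = M := by omega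
  have hmulNr : (Nt + 1) * Nr = 2 * ((Nt + 1) * M) := by rw [hM2]; ring
  have hmulge : 2 * M ≤ (Nt + 1) * M := Nat.mul_le_mul_right M (by omega)
  have hLn : L = (Nt + 1) * M - 1 := by omega
  have hdiv : ((Nr : ℤ)) / 2 = (M : ℤ) := by
    have : (Nr : ℤ) = 2 * M := by push_cast [hM2]; ring
    omega
  have hLcast : (L : ℝ) = ((Nt:ℝ) + 1) * (M:ℝ) - 1 := by
    rw [hLn, Nat.cast_sub (by nlinarith)]
    norm_num
  have hm0 : (0:ℝ) < (M:ℝ) := by exact_mod_cast hM1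
  have ht0 : (0:ℝ) < (Nt:ℝ) := by exact_mod_cast hNt
  have hm1 : (1:ℝ) ≤ (M:ℝ) := by exact_mod_cast hM1
  have ht1 : (1:ℝ) ≤ (Nt:ℝ) := by exact_mod_cast hNt
  -- generic sum transfer over ULA
  have sum_ULA : ∀ (n : ℕ) (f : ℤ → ℝ),
      ∑ d ∈ ULA n, f d = ∑ i ∈ Finset.range n, f (i : ℤ) := by
    intro n f
    rw [ULA_map, Finset.sum_map]
    rfl
  have card_ULA : ∀ n : ℕ, (ULA n).card = n := by
    intro n; rw [ULA_map, Finset.card_map, Finset.card_range]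
  -- clustered array
  have hC : clusteredArray Nr L
      = ULA M ∪ (ULA M).image (fun u => (L : ℤ) - u) := by
    rw [clusteredArray, hNr2]
  have hinj : Function.Injective (fun u : ℤ => (L : ℤ) - u) :=
    fun a b hab => by simpa using hab
  have hdisj : Disjoint (ULA M) ((ULA M).image (fun u => (L : ℤ) - u)) := by
    rw [Finset.disjoint_left]
    intro x hx hx2
    simp only [ULA, Finset.mem_Ico] at hx
    simp only [Finset.mem_image, ULA, Finset.mem_Ico] at hx2
    obtain ⟨u, ⟨hu0, hu1⟩, hux⟩ := hx2
    omega
  have cardC : (clusteredArray Nr L).card = 2 * M := by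
    rw [hC, Finset.card_union_of_disjoint hdisj,
      Finset.card_image_of_injective _ hinj, card_ULA]
    ring
  have sumC : ∑ d ∈ clusteredArray Nr L, (d : ℝ) = (M : ℝ) * (L : ℝ) := by
    rw [hC, Finset.sum_union hdisj, Finset.sum_image (fun a _ b _ h => hinj h),
      sum_ULA, sum_ULA]
    simp only [Int.cast_sub, Int.cast_natCast]
    rw [Finset.sum_sub_distrib, Finset.sum_const, Finset.card_range, nsmul_eq_mul,
      sum_range_real]
    ring
  have sqC : ∑ d ∈ clusteredArray Nr L, (d : ℝ)^2
      = (M:ℝ) * (L:ℝ)^2 - 2*(L:ℝ)*((M:ℝ)*((M:ℝ)-1)/2)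
        + 2 * ((M:ℝ)*((M:ℝ)-1)*(2*(M:ℝ)-1)/6) := by
    rw [hC, Finset.sum_union hdisj, Finset.sum_image (fun a _ b _ h => hinj h),
      sum_ULA, sum_ULA]
    simp only [Int.cast_sub, Int.cast_natCast]
    have expand : ∀ i ∈ Finset.range M,
        ((L:ℝ) - (i:ℝ))^2 = (L:ℝ)^2 - 2*(L:ℝ)*(i:ℝ) + (i:ℝ)^2 := by
      intro i _; ring
    rw [Finset.sum_congr rfl expand, Finset.sum_add_distrib, Finset.sum_sub_distrib,
      Finset.sum_const, Finset.card_range, nsmul_eq_mul, ← Finset.mul_sum,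
      sum_range_real, sum_range_sq_real]
    ring
  have varC : spatialVar (clusteredArray Nr L)
      = ((M:ℝ)^2 * (3*(Nt:ℝ)^2 + 1) - 1) / 12 := by
    rw [var_eq _ (by rw [cardC]; omega), spatialMean, cardC, sumC, sqC, hLcast]
    field_simp
    push_cast
    ring
  -- dilated ULA
  have hinj2 : Function.Injective (fun m : ℤ => ((Nr:ℤ)/2) * m) := by
    rw [hdiv]
    intro a b hab
    simp only at hab
    have hMne : (M:ℤ) ≠ 0 := by exact_mod_cast (by omega : M ≠ 0)
    exact mul_left_cancel₀ hMne hab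
  have cardT : ((ULA Nt).image (fun m => ((Nr:ℤ)/2) * m)).card = Nt := by
    rw [Finset.card_image_of_injective _ hinj2, card_ULA]
  have sumT : ∑ d ∈ (ULA Nt).image (fun m => ((Nr:ℤ)/2) * m), (d : ℝ)
      = (M:ℝ) * ((Nt:ℝ)*((Nt:ℝ)-1)/2) := by
    rw [Finset.sum_image (fun a _ b _ h => hinj2 h), sum_ULA]
    simp only [hdiv, Int.cast_mul, Int.cast_natCast]
    rw [← Finset.mul_sum, sum_range_real]
  have sqT : ∑ d ∈ (ULA Nt).image (fun m => ((Nr:ℤ)/2) * m), (d : ℝ)^2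
      = (M:ℝ)^2 * ((Nt:ℝ)*((Nt:ℝ)-1)*(2*(Nt:ℝ)-1)/6) := by
    rw [Finset.sum_image (fun a _ b _ h => hinj2 h), sum_ULA]
    simp only [hdiv, Int.cast_mul, Int.cast_natCast, mul_pow]
    rw [← Finset.mul_sum, sum_range_sq_real]
  have varT : spatialVar ((ULA Nt).image (fun m => ((Nr:ℤ)/2) * m))
      = (M:ℝ)^2 * ((Nt:ℝ)^2 - 1) / 12 := by
    rw [var_eq _ (by rw [cardT]; omega), spatialMean, cardT, sumT, sqT]
    field_simp
    ring
  rw [varC, varT]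
  nlinarith [sq_nonneg ((M:ℝ) - 1), sq_nonneg ((Nt:ℝ) - 1), mul_pos hm0 hm0,
    mul_pos ht0 ht0]
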